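/- Painless non-orthogonal expansions: let g ∈ L^∞(ℝᵈ) with supp g ⊆ [0, L]ᵈ, and α ≤ L, β ≤ 1/L. Then the Ron–Shen matrix R(x) with entries R(x)_{k,l} = Σ_{j∈ℤᵈ} g(x + αj − k/β) conj(g)(x + αj − l/β) is diagonal for a.e. x, and the Gabor system G(g, α, β) is a frame for L²(ℝᵈ) if and only if ess inf_{x∈ℝᵈ} Σ_{k∈ℤᵈ} |g(x − αk)|² > 0. -/

import Mathlib

open MeasureTheory Complex Real Finset
noncomputable section

/-- `Rd d` is Euclidean space `ℝ^d`. -/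
abbrev Rd (d : ℕ) := Fin d → ℝ
/-- Phase space (time-frequency space) `ℝ^d × ℝ^d`. -/
abbrev PS (d : ℕ) := Rd d × Rd d

/-- Euclidean dot product. -/
def dotR {d : ℕ} (x y : Rd d) : ℝ := ∑ i, x i * y i

/-- Time-frequency shift `π(w)f(t) = e^{2πi w₂·t} f(t - w₁)`. -/
def tfShift {d : ℕ} (w : PS d) (f : Rd d → ℂ) : Rd d → ℂ :=
  fun t => Complex.exp (2 * (π : ℂ) * I * (dotR w.2 t : ℝ)) * f (t - w.1)

/-- Short-time Fourier transform `V_g f(x, ξ) = ∫ f(t) conj(g)(t-x) e^{-2πi ξ·t} dt`. -/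
def stft {d : ℕ} (g f : Rd d → ℂ) (z : PS d) : ℂ :=
  ∫ t, f t * (starRingEnd ℂ) (g (t - z.1)) *
    Complex.exp (-(2 * (π : ℂ) * I * (dotR z.2 t : ℝ)))

/-- `L²` inner product `⟨f, h⟩ = ∫ f conj(h)` (linear in the first argument). -/
def l2inner {d : ℕ} (f h : Rd d → ℂ) : ℂ := ∫ t, f t * (starRingEnd ℂ) (h t)

/-- Cast an integer vector to a real vector. -/
def rvec {d : ℕ} (k : Fin d → ℤ) : Rd d := fun i => (k i : ℝ)

namespace PainlessAux
open scoped ENNReal NNReal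

lemma meas_sq_enorm {X : Type*} [MeasurableSpace X] {φ : X → ℂ} (h : Measurable φ) :
    Measurable fun x => ((‖φ x‖₊:ℝ≥0∞))^2 := (h.nnnorm.coe_nnreal_ennreal).pow_const 2

variable {X : Type*} [MeasurableSpace X] {μ : Measure X}

lemma sq_enorm_eq (z : ℂ) : ((‖z‖₊ : ℝ≥0∞))^2 = ENNReal.ofReal (‖z‖^2) := by
  rw [ENNReal.ofReal_pow (norm_nonneg _)]
  congr 1
  exact (ofReal_norm z).symm

lemma integrable_sq_norm {φ : X → ℂ} (hm : AEStronglyMeasurable φ μ)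
    (h : ∫⁻ x, ((‖φ x‖₊ : ℝ≥0∞))^2 ∂μ ≠ ∞) : Integrable (fun x => ‖φ x‖^2) μ := by
  refine ⟨(continuous_pow 2).comp_aestronglyMeasurable hm.norm, ?_⟩
  rw [hasFiniteIntegral_iff_norm]
  have : ∀ x, ENNReal.ofReal ‖(‖φ x‖^2)‖ = ((‖φ x‖₊ : ℝ≥0∞))^2 := by
    intro x
    rw [sq_enorm_eq, Real.norm_of_nonneg (by positivity)]
  simp_rw [this]
  exact lt_of_le_of_ne le_top h

lemma memℒp_two {φ : X → ℂ} (hm : AEStronglyMeasurable φ μ)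
    (h : ∫⁻ x, ((‖φ x‖₊ : ℝ≥0∞))^2 ∂μ ≠ ∞) : MemLp φ 2 μ :=
  (memLp_two_iff_integrable_sq_norm hm).2 (integrable_sq_norm hm h)

lemma lintegral_sq_ne_top {φ : X → ℂ} (h : MemLp φ 2 μ) :
    ∫⁻ x, ((‖φ x‖₊ : ℝ≥0∞))^2 ∂μ ≠ ∞ := by
  have h2 := (memLp_two_iff_integrable_sq_norm h.1).1 h
  have := h2.2
  rw [hasFiniteIntegral_iff_norm] at this
  have heq : ∀ x, ENNReal.ofReal ‖(‖φ x‖^2)‖ = ((‖φ x‖₊ : ℝ≥0∞))^2 := by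
    intro x
    rw [sq_enorm_eq, Real.norm_of_nonneg (by positivity)]
  simp_rw [heq] at this
  exact this.ne

lemma ofReal_integral_sq {φ : X → ℂ} (hm : AEStronglyMeasurable φ μ)
    (h : ∫⁻ x, ((‖φ x‖₊ : ℝ≥0∞))^2 ∂μ ≠ ∞) :
    ENNReal.ofReal (∫ x, ‖φ x‖^2 ∂μ) = ∫⁻ x, ((‖φ x‖₊ : ℝ≥0∞))^2 ∂μ := by
  rw [ofReal_integral_eq_lintegral_ofReal (integrable_sq_norm hm h)
    (Filter.Eventually.of_forall fun x => by positivity)]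
  simp_rw [sq_enorm_eq]


lemma parseval_line (T : ℝ) (hT : 0 < T) (a : ℝ) (f : ℝ → ℂ)
    (hm : Measurable f)
    (hfin : ∫⁻ t, ((‖f t‖₊ : ℝ≥0∞))^2 ≠ ∞)
    (hs : ∀ t, f t ≠ 0 → t ∈ Set.Icc a (a + T)) :
    ∑' n : ℤ, ((‖∫ t, f t * Complex.exp (-(2 * (π:ℂ) * I * ((T⁻¹ * n * t : ℝ) : ℂ)))‖₊ : ℝ≥0∞))^2
      = ENNReal.ofReal T * ∫⁻ t, ((‖f t‖₊ : ℝ≥0∞))^2 := by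
  haveI : Fact (0 < T) := ⟨hT⟩
  set c : ℤ → ℂ := fun n => ∫ t, f t * Complex.exp (-(2 * (π:ℂ) * I * ((T⁻¹ * n * t : ℝ) : ℂ)))
    with hc
  set h : AddCircle T → ℂ := AddCircle.liftIoc T a f with hh
  have hmh : Measurable h := by
    have : h = (fun x : Set.Ioc a (a+T) => f x) ∘ (AddCircle.measurableEquivIoc T a) := rfl
    rw [this]
    exact (hm.comp measurable_subtype_coe).comp (AddCircle.measurableEquivIoc T a).measurable
  have haea : ∀ᵐ t : ℝ, t ≠ a := by
    rw [ae_iff]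
    simpa using measure_singleton a
  -- lintegral of h over the circle equals lintegral of f over ℝ
  have hint_vol : ∫⁻ z : AddCircle T, ((‖h z‖₊:ℝ≥0∞))^2 = ∫⁻ t : ℝ, ((‖f t‖₊:ℝ≥0∞))^2 := by
    rw [← AddCircle.lintegral_preimage T a (fun z => ((‖h z‖₊:ℝ≥0∞))^2)]
    rw [← lintegral_indicator measurableSet_Ioc]
    refine lintegral_congr_ae ?_
    filter_upwards [haea] with t ht
    by_cases htI : t ∈ Set.Ioc a (a + T)
    · rw [Set.indicator_of_mem htI]
      have he : h ↑t = f t := AddCircle.liftIoc_coe_apply htI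
      rw [he]
    · rw [Set.indicator_of_notMem htI]
      have : f t = 0 := by
        by_contra hft
        have := hs t hft
        rcases this with ⟨h1, h2⟩
        exact htI ⟨lt_of_le_of_ne h1 (Ne.symm ht), h2⟩
      rw [this]
      simp
  have hTne : ENNReal.ofReal T ≠ 0 := by simp [hT]
  have hint_haar : ENNReal.ofReal T * ∫⁻ z, ((‖h z‖₊:ℝ≥0∞))^2 ∂AddCircle.haarAddCircle
      = ∫⁻ t : ℝ, ((‖f t‖₊:ℝ≥0∞))^2 := by
    rw [← hint_vol, AddCircle.volume_eq_smul_haarAddCircle, lintegral_smul_measure, smul_eq_mul]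
  have hfin_haar : ∫⁻ z, ((‖h z‖₊:ℝ≥0∞))^2 ∂AddCircle.haarAddCircle ≠ ∞ := by
    intro hcon
    rw [hcon, ENNReal.mul_top hTne] at hint_haar
    exact hfin hint_haar.symm
  have hmem : MemLp h 2 AddCircle.haarAddCircle := memℒp_two hmh.aestronglyMeasurable hfin_haar
  set hL : Lp ℂ 2 AddCircle.haarAddCircle := hmem.toLp h with hhL
  have hcoe : (hL : AddCircle T → ℂ) =ᵐ[AddCircle.haarAddCircle] h := hmem.coeFn_toLp
  -- Fourier coefficients of hL are (1/T) • c n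
  have hcoeff : ∀ n : ℤ, fourierCoeff (hL : AddCircle T → ℂ) n = (T : ℂ)⁻¹ • c n := by
    intro n
    have e1 : fourierCoeff (hL : AddCircle T → ℂ) n = fourierCoeff h n := by
      unfold fourierCoeff
      refine integral_congr_ae ?_
      filter_upwards [hcoe] with z hz
      rw [hz]
    rw [e1, hh, fourierCoeff_liftIoc_eq, fourierCoeffOn_eq_integral]
    have e2 : ∫ x in a..a + T, fourier (-n) (x : AddCircle (a + T - a)) • f x
        = ∫ x in Set.Ioc a (a+T), f x * Complex.exp (-(2 * (π:ℂ) * I * ((T⁻¹ * n * x : ℝ) : ℂ))) := by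
      rw [intervalIntegral.integral_of_le (by linarith : a ≤ a + T)]
      refine setIntegral_congr_fun measurableSet_Ioc (fun x hx => ?_)
      rw [fourier_coe_apply, smul_eq_mul, mul_comm]
      congr 1
      rw [add_sub_cancel_left]
      push_cast
      field_simp
    rw [e2]
    rw [setIntegral_eq_integral_of_ae_compl_eq_zero ?hae]
    case hae =>
      filter_upwards [haea] with t ht htI
      have : f t = 0 := by
        by_contra hft
        rcases hs t hft with ⟨h1, h2⟩
        exact htI ⟨lt_of_le_of_ne h1 (Ne.symm ht), h2⟩
      rw [this, zero_mul]
    rw [add_sub_cancel_left, hc]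
    norm_num
  -- summability of the coefficients
  have hsum : Summable (fun n : ℤ => ‖fourierCoeff (hL : AddCircle T → ℂ) n‖^2) := by
    have hmem2 := lp.memℓp (fourierBasis.repr hL)
    have h2 : (0:ℝ) < (2 : ℝ≥0∞).toReal := by norm_num
    have := (memℓp_gen_iff h2).1 hmem2
    have heq : ∀ n : ℤ, ‖fourierBasis.repr hL n‖ ^ (2 : ℝ≥0∞).toReal
        = ‖fourierCoeff (hL : AddCircle T → ℂ) n‖^2 := by
      intro n
      rw [fourierBasis_repr]
      norm_num
    rw [funext heq] at this
    exact this
  have hpars := tsum_sq_fourierCoeff hL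
  -- express ‖c n‖² in terms of coefficients
  have hcn : ∀ n : ℤ, ‖c n‖^2 = T^2 * ‖fourierCoeff (hL : AddCircle T → ℂ) n‖^2 := by
    intro n
    rw [hcoeff n, norm_smul]
    have : ‖(T:ℂ)⁻¹‖ = T⁻¹ := by
      rw [norm_inv, Complex.norm_real, Real.norm_of_nonneg hT.le]
    rw [this]
    rw [mul_pow]
    rw [← mul_assoc]
    rw [← mul_pow, mul_inv_cancel₀ hT.ne']
    norm_num
  have hsumc : Summable (fun n : ℤ => ‖c n‖^2) := by
    simp_rw [hcn]
    exact hsum.mul_left _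
  have htsumc : ∑' n : ℤ, ‖c n‖^2 = T^2 * ∫ z, ‖(hL : AddCircle T → ℂ) z‖^2 ∂AddCircle.haarAddCircle := by
    simp_rw [hcn]
    rw [tsum_mul_left, hpars]
  -- pass to ENNReal
  calc ∑' n : ℤ, ((‖c n‖₊ : ℝ≥0∞))^2
      = ∑' n : ℤ, ENNReal.ofReal (‖c n‖^2) := by simp_rw [sq_enorm_eq]
    _ = ENNReal.ofReal (∑' n : ℤ, ‖c n‖^2) :=
        (ENNReal.ofReal_tsum_of_nonneg (fun n => by positivity) hsumc).symm
    _ = ENNReal.ofReal (T^2) * ENNReal.ofReal (∫ z, ‖(hL : AddCircle T → ℂ) z‖^2 ∂AddCircle.haarAddCircle) := by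
        rw [htsumc, ENNReal.ofReal_mul (by positivity)]
    _ = ENNReal.ofReal (T^2) * ∫⁻ z, ((‖h z‖₊:ℝ≥0∞))^2 ∂AddCircle.haarAddCircle := by
        congr 1
        have : ∫ z, ‖(hL : AddCircle T → ℂ) z‖^2 ∂AddCircle.haarAddCircle
            = ∫ z, ‖h z‖^2 ∂AddCircle.haarAddCircle := by
          refine integral_congr_ae ?_
          filter_upwards [hcoe] with z hz
          rw [hz]
        rw [this]
        exact ofReal_integral_sq hmh.aestronglyMeasurable hfin_haar
    _ = ENNReal.ofReal T * ∫⁻ t : ℝ, ((‖f t‖₊:ℝ≥0∞))^2 := by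
        rw [← hint_haar, sq, ENNReal.ofReal_mul hT.le, mul_assoc]


lemma measurable_dotR {d : ℕ} (c : Rd d) : Measurable fun t : Rd d => dotR c t :=
  by unfold dotR; fun_prop

lemma measurable_expdot {d : ℕ} (c : Rd d) :
    Measurable fun t : Rd d => Complex.exp (-(2 * (π:ℂ) * I * ((dotR c t : ℝ) : ℂ))) :=
  Complex.measurable_exp.comp
    (((Complex.measurable_ofReal.comp (measurable_dotR c)).const_mul _).neg)

lemma norm_exp_neg (r : ℝ) : ‖Complex.exp (-(2 * (π:ℂ) * I * (r : ℂ)))‖ = 1 := by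
  rw [show -(2 * (π:ℂ) * I * (r:ℂ)) = ((-(2*π*r) : ℝ) : ℂ) * I by push_cast; ring]
  exact Complex.norm_exp_ofReal_mul_I _

lemma parseval_cube : ∀ (d : ℕ) (T : ℝ), 0 < T → ∀ (a : Rd d) (F : Rd d → ℂ),
    Measurable F → (∫⁻ t, ((‖F t‖₊:ℝ≥0∞))^2 ≠ ∞) →
    (∀ t, F t ≠ 0 → ∀ i, t i ∈ Set.Icc (a i) (a i + T)) →
    ∑' l : Fin d → ℤ,
      ((‖∫ t, F t * Complex.exp (-(2 * (π:ℂ) * I * ((dotR (T⁻¹ • rvec l) t : ℝ) : ℂ)))‖₊ : ℝ≥0∞))^2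
      = (ENNReal.ofReal T)^d * ∫⁻ t, ((‖F t‖₊:ℝ≥0∞))^2 := by
  intro d
  induction d with
  | zero =>
    intro T hT a F hFm hFfin hFs
    have h1 : (volume : Measure (Rd 0)) Set.univ = 1 := by
      rw [show (volume : Measure (Rd 0)) = Measure.pi (fun _ => volume) from volume_pi,
        Measure.pi_univ]
      simp
    have hdot : ∀ (l : Fin 0 → ℤ) (t : Rd 0), dotR (T⁻¹ • rvec l) t = 0 := by
      intro l t; simp [dotR]
    rw [tsum_eq_single (fun i => (0:ℤ)) (fun b hb => absurd (Subsingleton.elim b _) hb)]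
    simp only [hdot, Complex.ofReal_zero, mul_zero, neg_zero, Complex.exp_zero, mul_one]
    rw [integral_unique, lintegral_unique, h1, pow_zero, one_mul]
    simp [Measure.real, h1]
  | succ n IH =>
    intro T hT a F hFm hFfin hFs
    have hmp : MeasurePreserving
        (⇑(MeasurableEquiv.piFinSuccAbove (fun _ : Fin (n+1) => ℝ) 0).symm)
        (volume : Measure (ℝ × Rd n)) (volume : Measure (Rd (n+1))) :=
      (volume_preserving_piFinSuccAbove (fun _ : Fin (n + 1) => ℝ) 0).symm _
    set e := MeasurableEquiv.piFinSuccAbove (fun _ : Fin (n+1) => ℝ) 0 with he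
    have hesymm : ∀ y : ℝ × Rd n, e.symm y = Fin.cons y.1 y.2 := by
      intro y
      show (Fin.insertNthEquiv (fun _ : Fin (n+1) => ℝ) 0).symm.symm y = _
      rw [Equiv.symm_symm, Fin.insertNthEquiv_zero]
      rfl
    set G : ℝ × Rd n → ℂ := fun y => F (Fin.cons y.1 y.2) with hG
    have hGe : ∀ y, G y = F (e.symm y) := fun y => by rw [hesymm y]
    have hGm : Measurable G := by
      have : G = F ∘ ⇑e.symm := by funext y; rw [hGe y]; rfl
      rw [this]; exact hFm.comp e.symm.measurable
    have hGlint : ∫⁻ y : ℝ × Rd n, ((‖G y‖₊:ℝ≥0∞))^2 = ∫⁻ t : Rd (n+1), ((‖F t‖₊:ℝ≥0∞))^2 := by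
      rw [← hmp.lintegral_comp (meas_sq_enorm hFm)]
      exact lintegral_congr fun y => by rw [hGe y]
    have hGlint2 : ∫⁻ y₁ : ℝ, ∫⁻ y₂ : Rd n, ((‖G (y₁, y₂)‖₊:ℝ≥0∞))^2
        = ∫⁻ t : Rd (n+1), ((‖F t‖₊:ℝ≥0∞))^2 := by
      rw [← hGlint, Measure.volume_eq_prod, lintegral_prod _ (meas_sq_enorm hGm).aemeasurable]
    have hinner_meas : Measurable fun y₁ : ℝ => ∫⁻ y₂, ((‖G (y₁,y₂)‖₊:ℝ≥0∞))^2 :=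
      Measurable.lintegral_prod_right (meas_sq_enorm hGm)
    have hslice : ∀ᵐ y₁ : ℝ, ∫⁻ y₂, ((‖G (y₁, y₂)‖₊:ℝ≥0∞))^2 ≠ ∞ := by
      have hne : ∫⁻ y₁ : ℝ, ∫⁻ y₂ : Rd n, ((‖G (y₁, y₂)‖₊:ℝ≥0∞))^2 ≠ ∞ := by
        rw [hGlint2]; exact hFfin
      filter_upwards [ae_lt_top hinner_meas hne] with y₁ h
      exact h.ne
    -- Integrability of F and G
    have hFL2 : MemLp F 2 (volume : Measure (Rd (n+1))) := memℒp_two hFm.aestronglyMeasurable hFfin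
    have hFint : Integrable F (volume : Measure (Rd (n+1))) := by
      rw [← memLp_one_iff_integrable]
      refine hFL2.mono_exponent_of_measure_support_ne_top
        (s := Set.pi Set.univ fun i => Set.Icc (a i) (a i + T)) ?_ ?_ (by norm_num)
      · intro t ht
        by_contra hFt
        exact ht (Set.mem_univ_pi.2 (hFs t hFt))
      · rw [volume_pi_pi]
        simp only [Real.volume_Icc]
        refine (ENNReal.prod_lt_top (fun i _ => ?_)).ne
        exact ENNReal.ofReal_lt_top
    have hGint : Integrable G (volume : Measure (ℝ × Rd n)) := by
      have := (hmp.integrable_comp_emb e.symm.measurableEmbedding).2 hFint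
      exact this.congr (Filter.Eventually.of_forall fun y => (hGe y).symm)
    -- inner functions
    set h2 : (Fin n → ℤ) → ℝ → ℂ := fun l' y₁ =>
      ∫ y₂, G (y₁, y₂) * Complex.exp (-(2 * (π:ℂ) * I * ((dotR (T⁻¹ • rvec l') y₂ : ℝ) : ℂ)))
      with hh2
    have hh2m : ∀ l', Measurable (h2 l') := by
      intro l'
      have hsm : StronglyMeasurable (fun y : ℝ × Rd n =>
          G y * Complex.exp (-(2 * (π:ℂ) * I * ((dotR (T⁻¹ • rvec l') y.2 : ℝ) : ℂ)))) :=
        (hGm.mul ((measurable_expdot _).comp measurable_snd)).stronglyMeasurable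
      exact hsm.integral_prod_right'.measurable
    have hh2s : ∀ l' y₁, h2 l' y₁ ≠ 0 → y₁ ∈ Set.Icc (a 0) (a 0 + T) := by
      intro l' y₁ hne
      by_contra hy
      apply hne
      have hz : ∀ y₂ : Rd n, G (y₁, y₂) = 0 := by
        intro y₂
        by_contra hG0
        exact hy (by simpa [Fin.cons_zero] using hFs _ hG0 0)
      simp only [hh2, hz, zero_mul, integral_zero]
    have hIH : ∀ y₁ : ℝ, (∫⁻ y₂, ((‖G (y₁,y₂)‖₊:ℝ≥0∞))^2) ≠ ∞ →
        ∑' l' : Fin n → ℤ, ((‖h2 l' y₁‖₊:ℝ≥0∞))^2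
          = (ENNReal.ofReal T)^n * ∫⁻ y₂, ((‖G (y₁,y₂)‖₊:ℝ≥0∞))^2 := by
      intro y₁ hfin1
      refine IH T hT (fun i => a i.succ) (fun y₂ => G (y₁,y₂))
        (hGm.comp measurable_prodMk_left) hfin1 ?_
      intro y₂ hG0 i
      have := hFs _ hG0 i.succ
      simpa [Fin.cons_succ] using this
    have hh2fin : ∀ l', ∫⁻ y₁, ((‖h2 l' y₁‖₊:ℝ≥0∞))^2 ≠ ∞ := by
      intro l'
      have hle : ∫⁻ y₁, ((‖h2 l' y₁‖₊:ℝ≥0∞))^2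
          ≤ (ENNReal.ofReal T)^n * ∫⁻ t, ((‖F t‖₊:ℝ≥0∞))^2 := by
        rw [← hGlint2, ← lintegral_const_mul _ hinner_meas]
        refine lintegral_mono_ae ?_
        filter_upwards [hslice] with y₁ hfin1
        rw [← hIH y₁ hfin1]
        exact ENNReal.le_tsum l'
      exact ((lt_of_le_of_lt hle (ENNReal.mul_lt_top (ENNReal.pow_ne_top ENNReal.ofReal_ne_top).lt_top
        hFfin.lt_top)).ne)
    have hline : ∀ l', ∑' l₀ : ℤ,
        ((‖∫ y₁, h2 l' y₁ * Complex.exp (-(2 * (π:ℂ) * I * ((T⁻¹ * l₀ * y₁ : ℝ) : ℂ)))‖₊:ℝ≥0∞))^2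
        = ENNReal.ofReal T * ∫⁻ y₁, ((‖h2 l' y₁‖₊:ℝ≥0∞))^2 := fun l' =>
      parseval_line T hT (a 0) (h2 l') (hh2m l') (hh2fin l') (hh2s l')
    -- Fubini splitting of the coefficients
    have hsplit : ∀ (l₀ : ℤ) (l' : Fin n → ℤ),
        (∫ t : Rd (n+1), F t * Complex.exp
            (-(2 * (π:ℂ) * I * ((dotR (T⁻¹ • rvec (Fin.cons l₀ l')) t : ℝ) : ℂ))))
        = ∫ y₁ : ℝ, h2 l' y₁ * Complex.exp (-(2 * (π:ℂ) * I * ((T⁻¹ * l₀ * y₁ : ℝ) : ℂ))) := by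
      intro l₀ l'
      rw [← hmp.integral_comp e.symm.measurableEmbedding]
      have hpt : ∀ y : ℝ × Rd n,
          F (e.symm y) * Complex.exp
            (-(2 * (π:ℂ) * I * ((dotR (T⁻¹ • rvec (Fin.cons l₀ l')) (e.symm y) : ℝ) : ℂ)))
          = (G y * Complex.exp (-(2 * (π:ℂ) * I * ((dotR (T⁻¹ • rvec l') y.2 : ℝ) : ℂ))))
            * Complex.exp (-(2 * (π:ℂ) * I * ((T⁻¹ * l₀ * y.1 : ℝ) : ℂ))) := by
        intro y
        rw [hesymm y]
        have hdot : dotR (T⁻¹ • rvec (Fin.cons l₀ l')) (Fin.cons y.1 y.2)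
            = T⁻¹ * l₀ * y.1 + dotR (T⁻¹ • rvec l') y.2 := by
          simp only [dotR, Fin.sum_univ_succ, Pi.smul_apply, smul_eq_mul, rvec,
            Fin.cons_zero, Fin.cons_succ]
        rw [hdot, hG, Complex.ofReal_add, mul_add, neg_add, Complex.exp_add]
        ring
      rw [integral_congr_ae (Filter.Eventually.of_forall hpt)]
      have hint : Integrable (fun y : ℝ × Rd n =>
          (G y * Complex.exp (-(2 * (π:ℂ) * I * ((dotR (T⁻¹ • rvec l') y.2 : ℝ) : ℂ))))
            * Complex.exp (-(2 * (π:ℂ) * I * ((T⁻¹ * l₀ * y.1 : ℝ) : ℂ)))) volume := by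
        refine hGint.norm.mono' ?_ ?_
        · refine AEStronglyMeasurable.mul ?_ ?_
          · exact (hGm.mul ((measurable_expdot _).comp measurable_snd)).aestronglyMeasurable
          · exact Measurable.aestronglyMeasurable (by fun_prop)
        · refine Filter.Eventually.of_forall fun y => ?_
          rw [norm_mul, norm_mul, norm_exp_neg, norm_exp_neg, mul_one, mul_one]
      rw [Measure.volume_eq_prod] at hint ⊢
      rw [integral_prod _ hint]
      refine integral_congr_ae (Filter.Eventually.of_forall fun y₁ => ?_)
      exact integral_mul_const (Complex.exp (-(2 * (π:ℂ) * I * ((T⁻¹ * l₀ * y₁ : ℝ) : ℂ))))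
        (fun y₂ => G (y₁, y₂) * Complex.exp (-(2 * (π:ℂ) * I * ((dotR (T⁻¹ • rvec l') y₂ : ℝ) : ℂ))))
    -- assemble
    have hcons := ((Fin.consEquiv (fun _ : Fin (n+1) => ℤ)).tsum_eq (fun l : Fin (n+1) → ℤ =>
      ((‖∫ t, F t * Complex.exp (-(2 * (π:ℂ) * I * ((dotR (T⁻¹ • rvec l) t : ℝ) : ℂ)))‖₊ : ℝ≥0∞))^2))
    calc ∑' l : Fin (n+1) → ℤ,
        ((‖∫ t, F t * Complex.exp (-(2 * (π:ℂ) * I * ((dotR (T⁻¹ • rvec l) t : ℝ) : ℂ)))‖₊ : ℝ≥0∞))^2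
        = ∑' p : ℤ × (Fin n → ℤ),
          ((‖∫ t, F t * Complex.exp (-(2 * (π:ℂ) * I *
            ((dotR (T⁻¹ • rvec (Fin.cons p.1 p.2)) t : ℝ) : ℂ)))‖₊ : ℝ≥0∞))^2 := hcons.symm
      _ = ∑' (l₀ : ℤ) (l' : Fin n → ℤ),
          ((‖∫ y₁ : ℝ, h2 l' y₁ * Complex.exp (-(2 * (π:ℂ) * I * ((T⁻¹ * l₀ * y₁ : ℝ) : ℂ)))‖₊ : ℝ≥0∞))^2 := by
          rw [ENNReal.tsum_prod']
          exact tsum_congr fun l₀ => tsum_congr fun l' => by rw [hsplit l₀ l']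
      _ = ∑' (l' : Fin n → ℤ) (l₀ : ℤ),
          ((‖∫ y₁ : ℝ, h2 l' y₁ * Complex.exp (-(2 * (π:ℂ) * I * ((T⁻¹ * l₀ * y₁ : ℝ) : ℂ)))‖₊ : ℝ≥0∞))^2 :=
          ENNReal.tsum_comm
      _ = ∑' (l' : Fin n → ℤ), ENNReal.ofReal T * ∫⁻ y₁, ((‖h2 l' y₁‖₊:ℝ≥0∞))^2 :=
          tsum_congr fun l' => hline l'
      _ = ENNReal.ofReal T * ∑' (l' : Fin n → ℤ), ∫⁻ y₁, ((‖h2 l' y₁‖₊:ℝ≥0∞))^2 :=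
          ENNReal.tsum_mul_left
      _ = ENNReal.ofReal T * ∫⁻ y₁, ∑' (l' : Fin n → ℤ), ((‖h2 l' y₁‖₊:ℝ≥0∞))^2 := by
          rw [lintegral_tsum (fun l' => (meas_sq_enorm (hh2m l')).aemeasurable)]
      _ = ENNReal.ofReal T * ∫⁻ y₁, (ENNReal.ofReal T)^n * ∫⁻ y₂, ((‖G (y₁,y₂)‖₊:ℝ≥0∞))^2 := by
          congr 1
          refine lintegral_congr_ae ?_
          filter_upwards [hslice] with y₁ h1
          exact hIH y₁ h1
      _ = (ENNReal.ofReal T)^(n+1) * ∫⁻ t, ((‖F t‖₊:ℝ≥0∞))^2 := by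
          rw [lintegral_const_mul _ hinner_meas, hGlint2, pow_succ]
          ring


lemma gsum_bound {d : ℕ} (g : Rd d → ℂ) (L α Cg : ℝ) (hL : 0 < L) (hα : 0 < α)
    (hbd : ∀ t, ‖g t‖ ≤ Cg)
    (hsupp : ∀ t : Rd d, g t ≠ 0 → ∀ i, t i ∈ Set.Icc 0 L) (x : Rd d) :
    ∑' k : Fin d → ℤ, ((‖g (x - α • rvec k)‖₊:ℝ≥0∞))^2
      ≤ ENNReal.ofReal ((((⌊L/α⌋₊ + 2 : ℕ):ℝ))^d * Cg^2) := by
  classical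
  set N := (⌊L/α⌋₊ + 2 : ℕ) with hN
  set s : Finset (Fin d → ℤ) :=
    Fintype.piFinset fun i => Finset.Icc ⌈(x i - L)/α⌉ ⌊x i / α⌋ with hs
  have hvanish : ∀ k ∉ s, ((‖g (x - α • rvec k)‖₊:ℝ≥0∞))^2 = 0 := by
    intro k hk
    suffices hg0 : g (x - α • rvec k) = 0 by simp [hg0]
    by_contra hne
    apply hk
    rw [hs, Fintype.mem_piFinset]
    intro i
    have h1 := hsupp _ hne i
    simp only [Pi.sub_apply, Pi.smul_apply, smul_eq_mul, Set.mem_Icc] at h1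
    rw [Finset.mem_Icc]
    constructor
    · rw [Int.ceil_le, div_le_iff₀ hα]
      have : (rvec k) i = (k i : ℝ) := rfl
      rw [this] at h1
      nlinarith [h1.1, h1.2]
    · rw [Int.le_floor, le_div_iff₀ hα]
      have : (rvec k) i = (k i : ℝ) := rfl
      rw [this] at h1
      nlinarith [h1.1, h1.2]
  rw [tsum_eq_sum hvanish]
  have hterm : ∀ k ∈ s, ((‖g (x - α • rvec k)‖₊:ℝ≥0∞))^2 ≤ ENNReal.ofReal (Cg^2) := by
    intro k _
    rw [sq_enorm_eq]
    exact ENNReal.ofReal_le_ofReal (by nlinarith [norm_nonneg (g (x - α • rvec k)), hbd (x - α • rvec k)])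
  have hcard : s.card ≤ N^d := by
    rw [hs, Fintype.card_piFinset]
    calc ∏ i, (Finset.Icc ⌈(x i - L)/α⌉ ⌊x i / α⌋).card
        ≤ ∏ _i : Fin d, N := by
          refine Finset.prod_le_prod (fun _ _ => Nat.zero_le _) (fun i _ => ?_)
          rw [Int.card_Icc]
          have hf : (⌊x i / α⌋ : ℝ) ≤ x i / α := Int.floor_le _
          have hc : ((x i - L)/α : ℝ) ≤ ⌈(x i - L)/α⌉ := Int.le_ceil _
          have hNr : L/α + 1 ≤ ((⌊L/α⌋₊:ℝ) + 1) + 1 := by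
            have h2 := Nat.lt_floor_add_one (L/α)
            linarith
          have hz : ((⌊x i / α⌋ + 1 - ⌈(x i - L)/α⌉ : ℤ) : ℝ) ≤ (N:ℝ) := by
            push_cast [hN]
            have hd : x i / α - (x i - L)/α = L/α := by field_simp; ring
            linarith
          have hz2 : (⌊x i / α⌋ + 1 - ⌈(x i - L)/α⌉ : ℤ) ≤ (N:ℤ) := by exact_mod_cast hz
          omega
      _ = N^d := by simp
  calc ∑ k ∈ s, ((‖g (x - α • rvec k)‖₊:ℝ≥0∞))^2
      ≤ s.card • ENNReal.ofReal (Cg^2) := Finset.sum_le_card_nsmul s _ _ hterm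
    _ = (s.card : ℝ≥0∞) * ENNReal.ofReal (Cg^2) := by rw [nsmul_eq_mul]
    _ ≤ ((N^d : ℕ) : ℝ≥0∞) * ENNReal.ofReal (Cg^2) := by
        exact mul_le_mul_left (by exact_mod_cast hcard) _
    _ = ENNReal.ofReal ((((N:ℕ):ℝ))^d * Cg^2) := by
        rw [ENNReal.ofReal_mul (by positivity)]
        congr 1
        rw [← ENNReal.ofReal_natCast (N^d)]
        push_cast
        ring_nf

end PainlessAux

open PainlessAux
open scoped ENNReal NNReal

/-- Painless non-orthogonal expansions: if `g ∈ L^∞(ℝ^d)` with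
`supp g ⊆ [0,L]^d`, `α ≤ L` and `β ≤ 1/L`, then the Ron–Shen matrix `R(x)` is
diagonal for a.e. `x`, and `G(g, α, β)` is a frame for `L²(ℝ^d)` if and only if
`ess inf_x Σ_k |g(x - αk)|² > 0`. -/
theorem painless_expansions {d : ℕ} (g : Rd d → ℂ) (L α β Cg : ℝ)
    (hL : 0 < L) (hmeas : Measurable g) (hbd : ∀ t, ‖g t‖ ≤ Cg)
    (hsupp : ∀ t : Rd d, g t ≠ 0 → ∀ i, t i ∈ Set.Icc 0 L)
    (hα : 0 < α) (hαL : α ≤ L) (hβ : 0 < β) (hβL : β ≤ 1 / L) :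
    (∀ᵐ x : Rd d, ∀ k l : Fin d → ℤ, k ≠ l →
      (∑' j : Fin d → ℤ,
        g (x + α • rvec j - β⁻¹ • rvec k) *
          (starRingEnd ℂ) (g (x + α • rvec j - β⁻¹ • rvec l))) = 0) ∧
    ((∃ CA CB : ℝ, 0 < CA ∧ 0 < CB ∧
        ∀ f : Rd d → ℂ, MemLp f 2 (volume : Measure (Rd d)) →
          CA * ∫ t, ‖f t‖ ^ 2 ≤
              (∑' p : (Fin d → ℤ) × (Fin d → ℤ),
                ‖l2inner f (tfShift (α • rvec p.1, β • rvec p.2) g)‖ ^ 2) ∧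
            (∑' p : (Fin d → ℤ) × (Fin d → ℤ),
                ‖l2inner f (tfShift (α • rvec p.1, β • rvec p.2) g)‖ ^ 2) ≤
              CB * ∫ t, ‖f t‖ ^ 2) ↔
      ∃ CA : ℝ, 0 < CA ∧
        ∀ᵐ x : Rd d, CA ≤ ∑' k : Fin d → ℤ, ‖g (x - α • rvec k)‖ ^ 2) := by
  classical
  have hT : 0 < (β⁻¹ : ℝ) := by positivity
  have hLT : L ≤ β⁻¹ := by
    have h1 := one_div_le_one_div_of_le hβ hβL
    rw [one_div_one_div] at h1
    simpa [one_div] using h1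
  have hCg0 : 0 ≤ Cg := le_trans (norm_nonneg (g 0)) (hbd 0)
  constructor
  · -- diagonality of the Ron-Shen matrix
    have key : ∀ᵐ x : Rd d, ∀ (j k : Fin d → ℤ) (i : Fin d) (b : Bool),
        x i ≠ (cond b 0 L) - α * j i + β⁻¹ * k i := by
      rw [ae_all_iff]; intro j
      rw [ae_all_iff]; intro k
      rw [ae_all_iff]; intro i
      rw [ae_all_iff]; intro b
      rw [show (volume : Measure (Rd d)) = Measure.pi fun _ => volume from volume_pi]
      exact Measure.ae_eval_ne _ i _
    filter_upwards [key] with x hx k l hkl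
    have hterm : ∀ j : Fin d → ℤ,
        g (x + α • rvec j - β⁻¹ • rvec k) *
          (starRingEnd ℂ) (g (x + α • rvec j - β⁻¹ • rvec l)) = 0 := by
      intro j
      by_contra hne
      have h1 : g (x + α • rvec j - β⁻¹ • rvec k) ≠ 0 := fun h => hne (by rw [h, zero_mul])
      have h2 : g (x + α • rvec j - β⁻¹ • rvec l) ≠ 0 := by
        intro h; apply hne; rw [h, map_zero, mul_zero]
      obtain ⟨i, hi⟩ := Function.ne_iff.mp hkl
      have hu := hsupp _ h1 i
      have hv := hsupp _ h2 i
      simp only [Pi.add_apply, Pi.sub_apply, Pi.smul_apply, smul_eq_mul, Set.mem_Icc] at hu hv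
      have hrv : ∀ m : Fin d → ℤ, (rvec m) i = (m i : ℝ) := fun m => rfl
      simp only [hrv] at hu hv
      have hvu : (x i + α * ((j i:ℤ):ℝ) - β⁻¹ * (l i:ℝ)) - (x i + α * ((j i:ℤ):ℝ) - β⁻¹ * (k i:ℝ))
          = β⁻¹ * ((k i:ℝ) - (l i:ℝ)) := by ring
      set A := x i + α * ((j i:ℤ):ℝ) with hA
      set u := A - β⁻¹ * (k i:ℝ) with hudef
      set v := A - β⁻¹ * (l i:ℝ) with hvdef
      have h3 : |v - u| ≤ L := abs_le.2 ⟨by linarith [hu.1, hu.2, hv.1, hv.2],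
        by linarith [hu.1, hu.2, hv.1, hv.2]⟩
      have hone : (1:ℝ) ≤ |((k i:ℝ) - (l i:ℝ))| := by
        have h5 := Int.one_le_abs (sub_ne_zero.2 hi)
        calc (1:ℝ) = ((1:ℤ):ℝ) := by norm_num
          _ ≤ ((|k i - l i| : ℤ) : ℝ) := by exact_mod_cast h5
          _ = |((k i:ℝ) - (l i:ℝ))| := by push_cast; ring_nf
      have h4 : L ≤ |v - u| := by
        rw [hvu, abs_mul, abs_of_pos hT]
        calc L ≤ β⁻¹ := hLT
          _ = β⁻¹ * 1 := by ring
          _ ≤ β⁻¹ * |((k i:ℝ) - (l i:ℝ))| := by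
              exact mul_le_mul_of_nonneg_left hone hT.le
      have habs : v - u = L ∨ v - u = -L := (abs_eq hL.le).mp (le_antisymm h3 h4)
      rcases habs with hcase | hcase
      · exact hx j k i true (by
          show x i = 0 - α * ((j i : ℤ):ℝ) + β⁻¹ * ((k i : ℤ):ℝ)
          have h6 : u = 0 := by
            rcases hu with ⟨hu1, hu2⟩; rcases hv with ⟨hv1, hv2⟩
            linarith
          rw [hudef, hA] at h6
          linarith)
      · exact hx j k i false (by
          show x i = L - α * ((j i : ℤ):ℝ) + β⁻¹ * ((k i : ℤ):ℝ)
          have h6 : u = L := by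
            rcases hu with ⟨hu1, hu2⟩; rcases hv with ⟨hv1, hv2⟩
            linarith
          rw [hudef, hA] at h6
          linarith)

    calc (∑' j : Fin d → ℤ, g (x + α • rvec j - β⁻¹ • rvec k) *
          (starRingEnd ℂ) (g (x + α • rvec j - β⁻¹ • rvec l)))
        = ∑' _j : Fin d → ℤ, (0:ℂ) := tsum_congr hterm
      _ = 0 := tsum_zero
  · -- frame condition ↔ essential lower bound
    set T : ℝ := β⁻¹ with hTdef
    set Gp : Rd d → ℝ≥0∞ :=
      fun x => ∑' k : Fin d → ℤ, ((‖g (x - α • rvec k)‖₊:ℝ≥0∞))^2 with hGp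
    set Mb : ℝ := (((⌊L/α⌋₊ + 2 : ℕ):ℝ))^d * Cg^2 with hMb
    have hMb0 : 0 ≤ Mb := by positivity
    have hGpbd : ∀ x, Gp x ≤ ENNReal.ofReal Mb := fun x => gsum_bound g L α Cg hL hα hbd hsupp x
    have hGpne : ∀ x, Gp x ≠ ∞ := fun x => ((lt_of_le_of_lt (hGpbd x) ENNReal.ofReal_lt_top)).ne
    have hgm : ∀ k : Fin d → ℤ, Measurable fun x : Rd d => g (x - α • rvec k) :=
      fun k => hmeas.comp (measurable_id.sub measurable_const)
    have hGpm : Measurable Gp := Measurable.ennreal_tsum fun k => meas_sq_enorm (hgm k)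
    have hbridge : ∀ x, (∑' k : Fin d → ℤ, ‖g (x - α • rvec k)‖ ^ 2) = (Gp x).toReal := by
      intro x
      rw [hGp, ENNReal.tsum_toReal_eq (fun k => ENNReal.pow_ne_top ENNReal.coe_ne_top)]
      exact tsum_congr fun k => by simp [ENNReal.toReal_pow]
    have coeff_eq : ∀ (f : Rd d → ℂ) (k l : Fin d → ℤ),
        l2inner f (tfShift (α • rvec k, β • rvec l) g)
        = ∫ t, (f t * (starRingEnd ℂ) (g (t - α • rvec k))) *
            Complex.exp (-(2 * (π:ℂ) * I * ((dotR (T⁻¹ • rvec l) t : ℝ) : ℂ))) := by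
      intro f k l
      unfold l2inner tfShift
      refine integral_congr_ae (Filter.Eventually.of_forall fun t => ?_)
      have hTT : T⁻¹ = β := by rw [hTdef, inv_inv]
      rw [hTT]
      simp only []
      rw [map_mul, ← Complex.exp_conj]
      have hc2 : (starRingEnd ℂ) (2 * (π:ℂ) * I * ((dotR (β • rvec l) t : ℝ) : ℂ))
          = -(2 * (π:ℂ) * I * ((dotR (β • rvec l) t : ℝ) : ℂ)) := by
        simp only [map_mul, Complex.conj_I, Complex.conj_ofReal, map_ofNat]
        ring
      rw [hc2]
      ring
    have hgbd2 : ∀ u : Rd d, ((‖g u‖₊:ℝ≥0∞))^2 ≤ ENNReal.ofReal (Cg^2) := by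
      intro u; rw [sq_enorm_eq]
      exact ENNReal.ofReal_le_ofReal (by nlinarith [norm_nonneg (g u), hbd u])
    have master : ∀ f : Rd d → ℂ, Measurable f → (∫⁻ t, ((‖f t‖₊:ℝ≥0∞))^2 ≠ ∞) →
        (∑' p : (Fin d → ℤ) × (Fin d → ℤ),
          ((‖l2inner f (tfShift (α • rvec p.1, β • rvec p.2) g)‖₊:ℝ≥0∞))^2)
        = (ENNReal.ofReal T)^d * ∫⁻ t, ((‖f t‖₊:ℝ≥0∞))^2 * Gp t := by
      intro f hfm hffin
      have hFm : ∀ k : Fin d → ℤ,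
          Measurable (fun t => f t * (starRingEnd ℂ) (g (t - α • rvec k))) :=
        fun k => hfm.mul (continuous_star.measurable.comp (hgm k))
      have hnormp : ∀ (k : Fin d → ℤ) (t : Rd d),
          ((‖f t * (starRingEnd ℂ) (g (t - α • rvec k))‖₊:ℝ≥0∞))^2
          = ((‖f t‖₊:ℝ≥0∞))^2 * ((‖g (t - α • rvec k)‖₊:ℝ≥0∞))^2 := by
        intro k t
        rw [nnnorm_mul, RCLike.nnnorm_conj]
        push_cast
        ring
      have hFfin : ∀ k : Fin d → ℤ,
          ∫⁻ t, ((‖f t * (starRingEnd ℂ) (g (t - α • rvec k))‖₊:ℝ≥0∞))^2 ≠ ∞ := by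
        intro k
        have hle : ∫⁻ t, ((‖f t * (starRingEnd ℂ) (g (t - α • rvec k))‖₊:ℝ≥0∞))^2
            ≤ ∫⁻ t, ((‖f t‖₊:ℝ≥0∞))^2 * ENNReal.ofReal (Cg^2) := by
          refine lintegral_mono fun t => ?_
          rw [hnormp k t]
          exact mul_le_mul_right (hgbd2 _) _
        rw [lintegral_mul_const _ (meas_sq_enorm hfm)] at hle
        exact (lt_of_le_of_lt hle
          (ENNReal.mul_lt_top hffin.lt_top ENNReal.ofReal_lt_top)).ne
      have hk : ∀ k : Fin d → ℤ, (∑' l : Fin d → ℤ,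
          ((‖l2inner f (tfShift (α • rvec k, β • rvec l) g)‖₊:ℝ≥0∞))^2)
          = (ENNReal.ofReal T)^d
            * ∫⁻ t, ((‖f t‖₊:ℝ≥0∞))^2 * ((‖g (t - α • rvec k)‖₊:ℝ≥0∞))^2 := by
        intro k
        have hsup : ∀ t : Rd d, (fun t => f t * (starRingEnd ℂ) (g (t - α • rvec k))) t ≠ 0 →
            ∀ i, t i ∈ Set.Icc ((fun i => α * ((k i : ℤ):ℝ)) i)
              ((fun i => α * ((k i : ℤ):ℝ)) i + T) := by
          intro t hne i
          have hg0 : g (t - α • rvec k) ≠ 0 := by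
            intro h0; apply hne; simp [h0]
          have h1 := hsupp _ hg0 i
          simp only [Pi.sub_apply, Pi.smul_apply, smul_eq_mul, Set.mem_Icc] at h1
          have hrv : (rvec k) i = ((k i : ℤ):ℝ) := rfl
          rw [hrv] at h1
          simp only [Set.mem_Icc]
          constructor
          · linarith [h1.1]
          · linarith [h1.2, hLT]
        have hp := parseval_cube d T hT (fun i => α * ((k i : ℤ):ℝ)) _ (hFm k) (hFfin k) hsup
        calc (∑' l : Fin d → ℤ,
            ((‖l2inner f (tfShift (α • rvec k, β • rvec l) g)‖₊:ℝ≥0∞))^2)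
            = ∑' l : Fin d → ℤ, ((‖∫ t, (f t * (starRingEnd ℂ) (g (t - α • rvec k))) *
                Complex.exp (-(2 * (π:ℂ) * I * ((dotR (T⁻¹ • rvec l) t : ℝ) : ℂ)))‖₊:ℝ≥0∞))^2 :=
              tsum_congr fun l => by rw [coeff_eq f k l]
          _ = (ENNReal.ofReal T)^d
              * ∫⁻ t, ((‖f t * (starRingEnd ℂ) (g (t - α • rvec k))‖₊:ℝ≥0∞))^2 := hp
          _ = (ENNReal.ofReal T)^d
              * ∫⁻ t, ((‖f t‖₊:ℝ≥0∞))^2 * ((‖g (t - α • rvec k)‖₊:ℝ≥0∞))^2 := by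
              congr 1
              exact lintegral_congr fun t => hnormp k t
      rw [ENNReal.tsum_prod']
      calc (∑' (k : Fin d → ℤ) (l : Fin d → ℤ),
          ((‖l2inner f (tfShift (α • rvec k, β • rvec l) g)‖₊:ℝ≥0∞))^2)
          = ∑' k : Fin d → ℤ, (ENNReal.ofReal T)^d
            * ∫⁻ t, ((‖f t‖₊:ℝ≥0∞))^2 * ((‖g (t - α • rvec k)‖₊:ℝ≥0∞))^2 := tsum_congr hk
        _ = (ENNReal.ofReal T)^d * ∑' k : Fin d → ℤ,
            ∫⁻ t, ((‖f t‖₊:ℝ≥0∞))^2 * ((‖g (t - α • rvec k)‖₊:ℝ≥0∞))^2 := ENNReal.tsum_mul_left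
        _ = (ENNReal.ofReal T)^d * ∫⁻ t, ((‖f t‖₊:ℝ≥0∞))^2 * Gp t := by
            congr 1
            rw [← lintegral_tsum (f := fun k t => ((‖f t‖₊:ℝ≥0∞))^2 * ((‖g (t - α • rvec k)‖₊:ℝ≥0∞))^2) (fun k =>
              ((meas_sq_enorm hfm).mul (meas_sq_enorm (hgm k))).aemeasurable)]
            refine lintegral_congr fun t => ?_
            rw [ENNReal.tsum_mul_left]
    have hSreal : ∀ f : Rd d → ℂ,
        (∑' p : (Fin d → ℤ) × (Fin d → ℤ),
          ‖l2inner f (tfShift (α • rvec p.1, β • rvec p.2) g)‖ ^ 2)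
        = (∑' p : (Fin d → ℤ) × (Fin d → ℤ),
            ((‖l2inner f (tfShift (α • rvec p.1, β • rvec p.2) g)‖₊:ℝ≥0∞))^2).toReal := by
      intro f
      rw [ENNReal.tsum_toReal_eq (fun p => ENNReal.pow_ne_top ENNReal.coe_ne_top)]
      exact tsum_congr fun p => by simp [ENNReal.toReal_pow]
    have hTpow : (ENNReal.ofReal T)^d = ENNReal.ofReal (T^d) := (ENNReal.ofReal_pow hT.le d).symm
    have hTd0 : 0 < T^d := by positivity
    constructor
    · -- frame ⟹ essential lower bound
      rintro ⟨CA, CB, hCA, hCB, hframe⟩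
      refine ⟨β^d * CA, by positivity, ?_⟩
      by_contra hcon
      set c : ℝ := β^d * CA with hc
      have hU : (volume : Measure (Rd d))
          {x : Rd d | ¬ (c ≤ ∑' k : Fin d → ℤ, ‖g (x - α • rvec k)‖ ^ 2)} ≠ 0 :=
        fun h0 => hcon (ae_iff.mpr h0)
      set As : ℕ → ℕ → Set (Rd d) := fun n m =>
        {x | (Gp x).toReal ≤ c - 1/((n:ℝ)+1)} ∩ {x | ∀ i, |x i| ≤ (m:ℝ)} with hAs
      have hAmeas : ∀ n m, MeasurableSet (As n m) := by
        intro n m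
        refine MeasurableSet.inter ?_ ?_
        · exact measurableSet_le (ENNReal.measurable_toReal.comp hGpm) measurable_const
        · have hbox : {x : Rd d | ∀ i, |x i| ≤ (m:ℝ)} = ⋂ i, {x : Rd d | |x i| ≤ (m:ℝ)} := by
            ext x; simp
          rw [hbox]
          exact MeasurableSet.iInter fun i =>
            measurableSet_le (measurable_pi_apply i).abs measurable_const
      have hcover : {x : Rd d | ¬ (c ≤ ∑' k : Fin d → ℤ, ‖g (x - α • rvec k)‖ ^ 2)}
          ⊆ ⋃ (n : ℕ) (m : ℕ), As n m := by
        intro x hx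
        simp only [Set.mem_setOf_eq, not_le] at hx
        rw [hbridge x] at hx
        obtain ⟨n, hn⟩ := exists_nat_one_div_lt (by linarith : (0:ℝ) < c - (Gp x).toReal)
        have hm0 : ∀ i, |x i| ≤ ((⌈∑ i, |x i|⌉₊ : ℕ):ℝ) := by
          intro i
          calc |x i| ≤ ∑ j, |x j| :=
              Finset.single_le_sum (fun j _ => abs_nonneg (x j)) (Finset.mem_univ i)
            _ ≤ _ := Nat.le_ceil _
        refine Set.mem_iUnion.2 ⟨n, Set.mem_iUnion.2 ⟨⌈∑ i, |x i|⌉₊, ⟨?_, hm0⟩⟩⟩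
        simp only [Set.mem_setOf_eq]
        linarith
      obtain ⟨n, m, hnm⟩ : ∃ n m : ℕ, (volume : Measure (Rd d)) (As n m) ≠ 0 := by
        by_contra hall
        push_neg at hall
        apply hU
        refine measure_mono_null hcover ?_
        exact measure_iUnion_null fun n => measure_iUnion_null fun m => hall n m
      set ε : ℝ := 1/((n:ℝ)+1) with hε
      have hε0 : 0 < ε := by positivity
      have hAfin : (volume : Measure (Rd d)) (As n m) ≠ ∞ := by
        have hsub : As n m ⊆ Set.pi Set.univ (fun _i : Fin d => Set.Icc (-(m:ℝ)) (m:ℝ)) := by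
          intro x hx
          rw [Set.mem_univ_pi]
          intro i
          have h3 := hx.2 i
          rw [Set.mem_Icc]
          constructor
          · linarith [neg_abs_le (x i)]
          · linarith [le_abs_self (x i)]
        refine ((lt_of_le_of_lt (measure_mono hsub) ?_)).ne
        rw [volume_pi_pi]
        simp only [Real.volume_Icc]
        exact ENNReal.prod_lt_top fun i _ => ENNReal.ofReal_lt_top
      obtain ⟨x₀, hx₀⟩ := nonempty_of_measure_ne_zero hnm
      have hcε : 0 ≤ c - ε := le_trans (ENNReal.toReal_nonneg) hx₀.1
      set f : Rd d → ℂ := (As n m).indicator (fun _ => (1:ℂ)) with hfdef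
      have hfm : Measurable f := measurable_const.indicator (hAmeas n m)
      have hfsq : ∀ t, ((‖f t‖₊:ℝ≥0∞))^2 = (As n m).indicator (fun _ => (1:ℝ≥0∞)) t := by
        intro t
        rw [hfdef]
        by_cases ht : t ∈ As n m <;>
          simp [Set.indicator_of_mem, Set.indicator_of_notMem, ht]
      have hflint : ∫⁻ t, ((‖f t‖₊:ℝ≥0∞))^2 = (volume : Measure (Rd d)) (As n m) := by
        rw [lintegral_congr hfsq, lintegral_indicator (hAmeas n m)]
        simp
      have hffin : ∫⁻ t, ((‖f t‖₊:ℝ≥0∞))^2 ≠ ∞ := by rw [hflint]; exact hAfin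
      have hfmem : MemLp f 2 (volume : Measure (Rd d)) :=
        PainlessAux.memℒp_two hfm.aestronglyMeasurable hffin
      have hIf : ∫ t, ‖f t‖^2 = ((volume : Measure (Rd d)) (As n m)).toReal := by
        have h1 := ofReal_integral_sq hfm.aestronglyMeasurable hffin
        rw [hflint] at h1
        rw [← h1, ENNReal.toReal_ofReal (integral_nonneg fun t => by positivity)]
      have hSE := master f hfm hffin
      have hboundA : ∫⁻ t, ((‖f t‖₊:ℝ≥0∞))^2 * Gp t
          ≤ ENNReal.ofReal (c - ε) * (volume : Measure (Rd d)) (As n m) := by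
        have h2 : ∀ t, ((‖f t‖₊:ℝ≥0∞))^2 * Gp t
            ≤ (As n m).indicator (fun _ => ENNReal.ofReal (c - ε)) t := by
          intro t
          rw [hfsq t]
          by_cases ht : t ∈ As n m
          · rw [Set.indicator_of_mem ht, Set.indicator_of_mem ht, one_mul]
            exact (ENNReal.le_ofReal_iff_toReal_le (hGpne t) hcε).mpr ht.1
          · rw [Set.indicator_of_notMem ht, Set.indicator_of_notMem ht, zero_mul]
        calc ∫⁻ t, ((‖f t‖₊:ℝ≥0∞))^2 * Gp t
            ≤ ∫⁻ t, (As n m).indicator (fun _ => ENNReal.ofReal (c - ε)) t :=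
              lintegral_mono h2
          _ = ENNReal.ofReal (c - ε) * (volume : Measure (Rd d)) (As n m) := by
              rw [lintegral_indicator (hAmeas n m)]
              simp [mul_comm]
      have hlow := (hframe f hfmem).1
      rw [hSreal f, hSE, hIf] at hlow
      have hμpos : 0 < ((volume : Measure (Rd d)) (As n m)).toReal :=
        ENNReal.toReal_pos hnm hAfin
      have hfinP : (ENNReal.ofReal T)^d
          * (ENNReal.ofReal (c - ε) * (volume : Measure (Rd d)) (As n m)) ≠ ∞ := by
        rw [hTpow]
        exact (ENNReal.mul_lt_top ENNReal.ofReal_ne_top.lt_top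
          (ENNReal.mul_lt_top ENNReal.ofReal_ne_top.lt_top hAfin.lt_top)).ne
      have hstep : ((ENNReal.ofReal T)^d * ∫⁻ t, ((‖f t‖₊:ℝ≥0∞))^2 * Gp t).toReal
          ≤ T^d * ((c - ε) * ((volume : Measure (Rd d)) (As n m)).toReal) := by
        calc ((ENNReal.ofReal T)^d * ∫⁻ t, ((‖f t‖₊:ℝ≥0∞))^2 * Gp t).toReal
            ≤ ((ENNReal.ofReal T)^d
              * (ENNReal.ofReal (c-ε) * (volume : Measure (Rd d)) (As n m))).toReal :=
              ENNReal.toReal_mono hfinP (mul_le_mul_right hboundA _)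
          _ = T^d * ((c-ε) * ((volume : Measure (Rd d)) (As n m)).toReal) := by
              rw [hTpow, ENNReal.toReal_mul, ENNReal.toReal_mul,
                ENNReal.toReal_ofReal hTd0.le, ENNReal.toReal_ofReal hcε]
      have hfinal := le_trans hlow hstep
      have hTc : T^d * c = CA := by
        rw [hc, hTdef, ← mul_assoc, ← mul_pow, inv_mul_cancel₀ hβ.ne', one_pow, one_mul]
      nlinarith [hfinal, hTc, hμpos, hε0, hTd0, mul_pos (mul_pos hTd0 hε0) hμpos]
    · -- essential lower bound ⟹ frame
      rintro ⟨CA, hCA, hae⟩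
      refine ⟨T^d * CA, T^d * (Mb + 1), by positivity, by positivity, ?_⟩
      intro f hf
      set f' : Rd d → ℂ := hf.1.mk f with hf'def
      have hff' : f =ᵐ[volume] f' := hf.1.ae_eq_mk
      have hf'm : Measurable f' := hf.1.stronglyMeasurable_mk.measurable
      have hf'mem : MemLp f' 2 volume := hf.ae_eq hff'
      have hI2 : ∫⁻ t, ((‖f' t‖₊:ℝ≥0∞))^2 ≠ ∞ := lintegral_sq_ne_top hf'mem
      have hSE := master f' hf'm hI2
      have hl2 : ∀ p : (Fin d → ℤ) × (Fin d → ℤ),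
          l2inner f (tfShift (α • rvec p.1, β • rvec p.2) g)
          = l2inner f' (tfShift (α • rvec p.1, β • rvec p.2) g) := by
        intro p
        unfold l2inner
        refine integral_congr_ae ?_
        filter_upwards [hff'] with t ht
        rw [ht]
      have hSeq : (∑' p : (Fin d → ℤ) × (Fin d → ℤ),
          ‖l2inner f (tfShift (α • rvec p.1, β • rvec p.2) g)‖ ^ 2)
          = ((ENNReal.ofReal T)^d * ∫⁻ t, ((‖f' t‖₊:ℝ≥0∞))^2 * Gp t).toReal := by
        rw [tsum_congr (fun p => by rw [hl2 p]), hSreal f', hSE]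
      have hIeq : ∫ t, ‖f t‖^2 = (∫⁻ t, ((‖f' t‖₊:ℝ≥0∞))^2).toReal := by
        have h1 : ∫ t, ‖f t‖^2 = ∫ t, ‖f' t‖^2 :=
          integral_congr_ae (hff'.mono fun t ht => by show ‖f t‖^2 = ‖f' t‖^2; rw [ht])
        rw [h1, ← ofReal_integral_sq hf'm.aestronglyMeasurable hI2,
          ENNReal.toReal_ofReal (integral_nonneg (fun t => by positivity))]
      have hup : ∫⁻ t, ((‖f' t‖₊:ℝ≥0∞))^2 * Gp t
          ≤ ENNReal.ofReal (Mb+1) * ∫⁻ t, ((‖f' t‖₊:ℝ≥0∞))^2 := by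
        rw [← lintegral_const_mul _ (meas_sq_enorm hf'm)]
        refine lintegral_mono fun t => ?_
        rw [mul_comm (ENNReal.ofReal (Mb+1)) _]
        exact mul_le_mul_right (le_trans (hGpbd t)
          (ENNReal.ofReal_le_ofReal (by linarith))) _
      have hlow : ENNReal.ofReal CA * ∫⁻ t, ((‖f' t‖₊:ℝ≥0∞))^2
          ≤ ∫⁻ t, ((‖f' t‖₊:ℝ≥0∞))^2 * Gp t := by
        rw [← lintegral_const_mul _ (meas_sq_enorm hf'm)]
        refine lintegral_mono_ae ?_
        filter_upwards [hae] with x hx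
        rw [mul_comm (ENNReal.ofReal CA) _]
        refine mul_le_mul_right ?_ _
        rw [hbridge x] at hx
        exact (ENNReal.ofReal_le_iff_le_toReal (hGpne x)).mpr hx
      have hWfin : (ENNReal.ofReal T)^d * ∫⁻ t, ((‖f' t‖₊:ℝ≥0∞))^2 * Gp t ≠ ∞ := by
        refine (lt_of_le_of_lt (mul_le_mul_right hup _) ?_).ne
        rw [hTpow]
        exact ENNReal.mul_lt_top ENNReal.ofReal_ne_top.lt_top
          (ENNReal.mul_lt_top ENNReal.ofReal_ne_top.lt_top hI2.lt_top)
      rw [hSeq, hIeq]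
      constructor
      · have hchain : ENNReal.ofReal (T^d * CA) * ∫⁻ t, ((‖f' t‖₊:ℝ≥0∞))^2
            ≤ (ENNReal.ofReal T)^d * ∫⁻ t, ((‖f' t‖₊:ℝ≥0∞))^2 * Gp t := by
          rw [ENNReal.ofReal_mul hTd0.le, ← hTpow, mul_assoc]
          exact mul_le_mul_right hlow _
        calc T^d * CA * (∫⁻ t, ((‖f' t‖₊:ℝ≥0∞))^2).toReal
            = (ENNReal.ofReal (T^d * CA) * ∫⁻ t, ((‖f' t‖₊:ℝ≥0∞))^2).toReal := by
              rw [ENNReal.toReal_mul, ENNReal.toReal_ofReal (by positivity)]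
          _ ≤ ((ENNReal.ofReal T)^d * ∫⁻ t, ((‖f' t‖₊:ℝ≥0∞))^2 * Gp t).toReal :=
              ENNReal.toReal_mono hWfin hchain
      · have hchain2 : (ENNReal.ofReal T)^d * ∫⁻ t, ((‖f' t‖₊:ℝ≥0∞))^2 * Gp t
            ≤ ENNReal.ofReal (T^d * (Mb+1)) * ∫⁻ t, ((‖f' t‖₊:ℝ≥0∞))^2 := by
          rw [ENNReal.ofReal_mul hTd0.le, ← hTpow, mul_assoc]
          exact mul_le_mul_right hup _
        calc ((ENNReal.ofReal T)^d * ∫⁻ t, ((‖f' t‖₊:ℝ≥0∞))^2 * Gp t).toReal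
            ≤ (ENNReal.ofReal (T^d * (Mb+1)) * ∫⁻ t, ((‖f' t‖₊:ℝ≥0∞))^2).toReal :=
              ENNReal.toReal_mono
                (ENNReal.mul_lt_top ENNReal.ofReal_ne_top.lt_top hI2.lt_top).ne hchain2
          _ = T^d * (Mb+1) * (∫⁻ t, ((‖f' t‖₊:ℝ≥0∞))^2).toReal := by
              rw [ENNReal.toReal_mul, ENNReal.toReal_ofReal (by positivity)]
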